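/- A real Banach space X is smooth if and only if for every bounded linear operator T : X → X and every unit vector x with ‖Tx‖ = ‖T‖, one has: x ⊥_B w implies Tx ⊥_B Tw for all w ∈ X. -/

import Mathlib

/-- Birkhoff-James orthogonality: `u ⊥_B v` iff `‖u + λ v‖ ≥ ‖u‖` for all real `λ`. -/
def BJOrth {E : Type*} [NormedAddCommGroup E] [NormedSpace ℝ E] (u v : E) : Prop :=
  ∀ l : ℝ, ‖u‖ ≤ ‖u + l • v‖

/-- Converse James: a norming functional vanishing at `w` gives BJ orthogonality. -/
lemma bjorth_of_dual {X : Type*} [NormedAddCommGroup X] [NormedSpace ℝ X]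
    {x w : X} (f : X →L[ℝ] ℝ) (hf : ‖f‖ ≤ 1) (hfx : f x = ‖x‖) (hfw : f w = 0) :
    BJOrth x w := by
  intro l
  calc ‖x‖ = f (x + l • w) := by simp [hfx, hfw]
    _ ≤ |f (x + l • w)| := le_abs_self _
    _ ≤ ‖f‖ * ‖x + l • w‖ := f.le_opNorm _
    _ ≤ 1 * ‖x + l • w‖ := by gcongr
    _ = ‖x + l • w‖ := one_mul _

/-- James: if `x ⊥_B w` and `x ≠ 0` then there is a norming functional at `x` killing `w`. -/
lemma exists_dual_of_bjorth {X : Type*} [NormedAddCommGroup X] [NormedSpace ℝ X]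
    [CompleteSpace X] {x w : X} (hx : x ≠ 0) (h : BJOrth x w) :
    ∃ f : X →L[ℝ] ℝ, ‖f‖ = 1 ∧ f x = ‖x‖ ∧ f w = 0 := by
  set S : Submodule ℝ X := Submodule.span ℝ {w} with hS
  haveI : FiniteDimensional ℝ S := by
    apply FiniteDimensional.span_of_finite; exact Set.finite_singleton w
  haveI : IsClosed (S : Set X) := S.closed_of_finiteDimensional
  have hq : ‖(Submodule.Quotient.mk x : X ⧸ S)‖ = ‖x‖ := by
    refine le_antisymm (Submodule.Quotient.norm_mk_le S x) ?_
    by_contra hlt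
    push_neg at hlt
    obtain ⟨m, hm, hmn⟩ := Submodule.Quotient.norm_mk_lt
      (Submodule.Quotient.mk x : X ⧸ S) (sub_pos.mpr hlt)
    have hmem : m - x ∈ S := (Submodule.Quotient.eq S).mp hm
    obtain ⟨l, hl⟩ := Submodule.mem_span_singleton.mp hmem
    have : m = x + l • w := by rw [hl]; abel
    have h2 := h l
    rw [← this] at h2
    have : ‖m‖ < ‖x‖ := by
      have := hmn; linarith
    linarith
  have hne : (Submodule.Quotient.mk x : X ⧸ S) ≠ 0 := by
    intro h0
    rw [h0, norm_zero] at hq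
    exact hx (norm_eq_zero.mp hq.symm)
  obtain ⟨g, hg1, hgx'⟩ := exists_dual_vector ℝ (Submodule.Quotient.mk x : X ⧸ S) (norm_ne_zero_iff.mpr hne)
  have hgx : g (Submodule.Quotient.mk x) = ‖(Submodule.Quotient.mk x : X ⧸ S)‖ := by exact_mod_cast hgx'
  set f : X →L[ℝ] ℝ := LinearMap.mkContinuous
    (g.toLinearMap.comp S.mkQ) 1 (by
      intro z
      calc ‖g (S.mkQ z)‖ ≤ ‖g‖ * ‖S.mkQ z‖ := g.le_opNorm _
        _ ≤ 1 * ‖z‖ := by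
            rw [hg1, one_mul, one_mul]
            exact Submodule.Quotient.norm_mk_le S z) with hf
  have hfx : f x = ‖x‖ := by
    show g (S.mkQ x) = ‖x‖
    rw [show S.mkQ x = Submodule.Quotient.mk x from rfl, hgx, hq]
  have hfw : f w = 0 := by
    show g (S.mkQ w) = 0
    have : S.mkQ w = 0 := (Submodule.Quotient.mk_eq_zero S).mpr
      (Submodule.mem_span_singleton_self w)
    rw [this, map_zero]
  refine ⟨f, le_antisymm (LinearMap.mkContinuous_norm_le _ zero_le_one _) ?_, hfx, hfw⟩
  have hxpos : (0:ℝ) < ‖x‖ := norm_pos_iff.mpr hx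
  have : ‖x‖ ≤ ‖f‖ * ‖x‖ := by
    calc ‖x‖ = ‖f x‖ := by rw [hfx]; simp [abs_of_nonneg (norm_nonneg x)]
      _ ≤ ‖f‖ * ‖x‖ := f.le_opNorm x
  exact le_of_mul_le_mul_right (by linarith) hxpos

theorem stmt16 {X : Type*} [NormedAddCommGroup X] [NormedSpace ℝ X] [CompleteSpace X] :
    (∀ z : X, ‖z‖ = 1 → ∃! f : X →L[ℝ] ℝ, ‖f‖ = 1 ∧ f z = 1) ↔
      (∀ (T : X →L[ℝ] X) (x : X), ‖x‖ = 1 → ‖T x‖ = ‖T‖ →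
        ∀ w : X, BJOrth x w → BJOrth (T x) (T w)) := by
  constructor
  · intro hsm T x hx hTx w hxw
    by_cases hT : T = 0
    · subst hT; intro l; simp
    have hTn : (0:ℝ) < ‖T‖ := norm_pos_iff.mpr hT
    have hTxne : T x ≠ 0 := by
      intro h0; rw [h0, norm_zero] at hTx; exact hT (norm_eq_zero.mp hTx.symm)
    obtain ⟨g, hg1, hgTx'⟩ := exists_dual_vector ℝ (T x) (norm_ne_zero_iff.mpr hTxne)
    have hgTx : g (T x) = ‖T x‖ := by exact_mod_cast hgTx'
    have hxne : x ≠ 0 := by intro h0; rw [h0, norm_zero] at hx; norm_num at hx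
    obtain ⟨f, hf1, hfx, hfw⟩ := exists_dual_of_bjorth hxne hxw
    -- h := ‖T‖⁻¹ • (g ∘ T) is a supporting functional at x
    set hfun : X →L[ℝ] ℝ := ‖T‖⁻¹ • (g.comp T) with hhf
    have hhx : hfun x = 1 := by
      show ‖T‖⁻¹ • g (T x) = 1
      rw [hgTx, hTx, smul_eq_mul, inv_mul_cancel₀ (ne_of_gt hTn)]
    have hhle : ‖hfun‖ ≤ 1 := by
      refine ContinuousLinearMap.opNorm_le_bound _ zero_le_one ?_
      intro z
      show ‖‖T‖⁻¹ • g (T z)‖ ≤ 1 * ‖z‖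
      rw [norm_smul, norm_inv, norm_norm, one_mul]
      calc ‖T‖⁻¹ * ‖g (T z)‖ ≤ ‖T‖⁻¹ * (‖g‖ * ‖T z‖) := by
            gcongr; exact g.le_opNorm _
        _ = ‖T‖⁻¹ * ‖T z‖ := by rw [hg1, one_mul]
        _ ≤ ‖T‖⁻¹ * (‖T‖ * ‖z‖) := by gcongr; exact T.le_opNorm z
        _ = ‖z‖ := by field_simp
    have hh1 : ‖hfun‖ = 1 := by
      refine le_antisymm hhle ?_
      have : (1:ℝ) = ‖hfun x‖ := by rw [hhx]; norm_num
      calc (1:ℝ) = ‖hfun x‖ := this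
        _ ≤ ‖hfun‖ * ‖x‖ := hfun.le_opNorm x
        _ = ‖hfun‖ := by rw [hx, mul_one]
    -- uniqueness: hfun = f
    obtain ⟨u, hu, huniq⟩ := hsm x hx
    have hfu : f = u := huniq f ⟨hf1, by rw [hfx, hx]⟩
    have hhu : hfun = u := huniq hfun ⟨hh1, hhx⟩
    have hgTw : g (T w) = 0 := by
      have : hfun w = f w := by rw [hfu, hhu]
      rw [hfw] at this
      have h2 : ‖T‖⁻¹ • g (T w) = 0 := this
      have := smul_eq_zero.mp h2
      rcases this with h3 | h3
      · exact absurd h3 (inv_ne_zero (ne_of_gt hTn))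
      · exact h3
    exact bjorth_of_dual g (le_of_eq hg1) (by rw [hgTx]) hgTw
  · intro hBS z hz
    have hzne : z ≠ 0 := by intro h0; rw [h0, norm_zero] at hz; norm_num at hz
    obtain ⟨f, hf1, hfz'⟩ := exists_dual_vector ℝ z (norm_ne_zero_iff.mpr hzne)
    have hfz : f z = 1 := by rw [hz] at hfz'; exact_mod_cast hfz'
    refine ⟨f, ⟨hf1, hfz⟩, ?_⟩
    rintro g ⟨hg1, hgz⟩
    by_contra hne
    -- pick y with f y = 0, g y ≠ 0? we need y' with g y' = 0, f y' ≠ 0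
    have : ∃ w : X, g w ≠ f w := by
      by_contra hall
      push_neg at hall
      exact hne (ContinuousLinearMap.ext hall)
    obtain ⟨w, hw⟩ := this
    set y : X := w - (g w) • z with hy
    have hgy : g y = 0 := by simp [hy, hgz, smul_eq_mul]
    have hfy : f y ≠ 0 := by
      simp only [hy, map_sub, map_smul, hfz, smul_eq_mul, mul_one]
      intro h0
      exact hw (by linarith [sub_eq_zero.mp h0])
    have hzy : BJOrth z y := bjorth_of_dual g (le_of_eq hg1) (by rw [hgz, hz]) hgy
    -- T u = f(u) • z
    set T : X →L[ℝ] X := ContinuousLinearMap.smulRight f z with hT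
    have hTz : T z = z := by simp [hT, hfz]
    have hTnorm : ‖T z‖ = ‖T‖ := by
      rw [hTz, hz]
      refine le_antisymm ?_ ?_
      · calc (1:ℝ) = ‖T z‖ := by rw [hTz, hz]
          _ ≤ ‖T‖ * ‖z‖ := T.le_opNorm z
          _ = ‖T‖ := by rw [hz, mul_one]
      · refine ContinuousLinearMap.opNorm_le_bound _ zero_le_one ?_
        intro u
        show ‖f u • z‖ ≤ 1 * ‖u‖
        rw [norm_smul, hz, mul_one, one_mul]
        calc ‖f u‖ ≤ ‖f‖ * ‖u‖ := f.le_opNorm u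
          _ = ‖u‖ := by rw [hf1, one_mul]
    have hperp := hBS T z hz hTnorm y hzy
    rw [hTz] at hperp
    have hTy : T y = (f y) • z := rfl
    have := hperp (-(f y)⁻¹)
    rw [hTy, smul_smul] at this
    have hc : -(f y)⁻¹ * f y = -1 := by field_simp
    rw [hc] at this
    simp [hz] at this
    linarith
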